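/- If 𝔐 is a nonempty ZFSet each of whose elements is an Anfang, then the intersection ⋂₀ 𝔐 (ZFSet.sInter 𝔐) is an Anfang. -/
import Mathlib


/-- The von Neumann natural number `n̄`: `0̄ = ∅`, `(n+1)‾ = n̄⁺ = insert n̄ n̄`. -/
def vN : ℕ → ZFSet
  | 0 => ∅
  | n + 1 => insert (vN n) (vN n)

/-- An *Anfang* in the sense of von Neumann's letter to Fraenkel of 17 June 1927:
every element `u` of `M` is either the pair `⟨1̄, ω⟩` or of the form `⟨x⁺, ℘(y)⟩`
for some pair `⟨x, y⟩ ∈ M`. -/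
def Anfang (M : ZFSet) : Prop :=
  ∀ u ∈ M, u = ZFSet.pair (vN 1) ZFSet.omega ∨
    ∃ x y : ZFSet, ZFSet.pair x y ∈ M ∧ u = ZFSet.pair (insert x x) (ZFSet.powerset y)

lemma succ_inj' {x y : ZFSet} (h : insert x x = insert y y) : x = y := by
  have hx : x ∈ insert y y := h ▸ ZFSet.mem_insert x x
  have hy : y ∈ insert x x := h ▸ ZFSet.mem_insert y y
  rcases ZFSet.mem_insert_iff.1 hx with h1 | h1
  · exact h1
  rcases ZFSet.mem_insert_iff.1 hy with h2 | h2
  · exact h2.symm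
  · exact absurd h1 (ZFSet.mem_asymm h2)

lemma powerset_inj' {x y : ZFSet} (h : ZFSet.powerset x = ZFSet.powerset y) : x = y := by
  have hx : x ∈ ZFSet.powerset y := h ▸ ZFSet.mem_powerset.2 (fun _ h => h)
  have hy : y ∈ ZFSet.powerset x := h.symm ▸ ZFSet.mem_powerset.2 (fun _ h => h)
  exact subset_antisymm (ZFSet.mem_powerset.1 hx) (ZFSet.mem_powerset.1 hy)

/-- The intersection of a nonempty set of Anfänge is an Anfang. -/
theorem Anfang.sInter {𝔐 : ZFSet} (hne : 𝔐.Nonempty) (h : ∀ M ∈ 𝔐, Anfang M) :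
    Anfang (ZFSet.sInter 𝔐) := by
  intro u hu
  obtain ⟨M0, hM0⟩ := hne
  have hu0 : u ∈ M0 := (ZFSet.mem_sInter ⟨M0, hM0⟩).1 hu M0 hM0
  rcases h M0 hM0 u hu0 with h1 | ⟨x, y, hxy, hux⟩
  · exact Or.inl h1
  by_cases hpair : u = ZFSet.pair (vN 1) ZFSet.omega
  · exact Or.inl hpair
  refine Or.inr ⟨x, y, (ZFSet.mem_sInter ⟨M0, hM0⟩).2 ?_, hux⟩
  intro M hM
  have huM : u ∈ M := (ZFSet.mem_sInter ⟨M0, hM0⟩).1 hu M hM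
  rcases h M hM u huM with h1 | ⟨x', y', hxy', hux'⟩
  · exact absurd h1 hpair
  have := ZFSet.pair_injective ((hux'.symm.trans hux) : ZFSet.pair (insert x' x') (ZFSet.powerset y') = ZFSet.pair (insert x x) (ZFSet.powerset y))
  obtain ⟨h1, h2⟩ := this
  rwa [succ_inj' h1, powerset_inj' h2] at hxy'
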